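/- Let p ≥ 1 and φ : ℤ → ℕ → ℝ with φ t j = 0 for all j > p. Assume there exists δ ∈ (0,1) such that for every t ∈ ℤ: 0 < ∑_{j=1}^{p} |φ (t+j) j| ≤ δ·|φ t 0|. Then φ has a left inverse with absolutely summable coefficients: there exists θ : ℤ → ℕ → ℝ such that ∑_{i=0}^{∞} |θ t i| < ∞ for every t, and for all t ∈ ℤ and all i ∈ ℕ, ∑_{j=0}^{min(p,i)} θ t (i−j) · φ (t−i+j) j equals 1 when i = 0 and equals 0 when i ≥ 1. -/

import Mathlib

open Finset

noncomputable def theta (p : ℕ) (φ : ℤ → ℕ → ℝ) (t : ℤ) : ℕ → ℝ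
  | 0 => 1 / φ t 0
  | (i+1) => -(∑ j ∈ (Finset.Icc 1 (min p (i+1))).attach,
      theta p φ t (i + 1 - j.1) * φ (t - (i+1 : ℕ) + j.1) j.1) / φ (t - (i+1 : ℕ)) 0
  decreasing_by
    have h1 := (Finset.mem_Icc.mp j.2).1
    omega

lemma theta_succ (p : ℕ) (φ : ℤ → ℕ → ℝ) (t : ℤ) (i : ℕ) :
    theta p φ t (i+1) = -(∑ j ∈ Finset.Icc 1 (min p (i+1)),
      theta p φ t (i + 1 - j) * φ (t - (i+1 : ℕ) + j) j) / φ (t - (i+1 : ℕ)) 0 := by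
  rw [theta,
    Finset.sum_attach (Finset.Icc 1 (min p (i+1)))
      (fun j => theta p φ t (i + 1 - j) * φ (t - (i+1 : ℕ) + j) j)]

lemma theta_bound (p : ℕ) (hp : 1 ≤ p)
    (φ : ℤ → ℕ → ℝ)
    (δ : ℝ) (hδ0 : 0 < δ) (hδ1 : δ < 1)
    (hdom : ∀ t : ℤ,
      0 < ∑ j ∈ Finset.Icc 1 p, |φ (t + j) j| ∧
      ∑ j ∈ Finset.Icc 1 p, |φ (t + j) j| ≤ δ * |φ t 0|)
    (hφ0 : ∀ s : ℤ, 0 < |φ s 0|)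
    (t : ℤ) : ∀ i, |theta p φ t i| ≤ |theta p φ t 0| * δ ^ (i / p) := by
  intro i
  induction i using Nat.strong_induction_on with
  | _ i ih =>
    match i with
    | 0 => simp
    | (k+1) =>
      set B := |theta p φ t 0| with hB
      have hBnn : 0 ≤ B := abs_nonneg _
      rw [theta_succ, abs_div, abs_neg]
      rw [div_le_iff₀ (hφ0 _)]
      calc |∑ j ∈ Finset.Icc 1 (min p (k+1)),
              theta p φ t (k + 1 - j) * φ (t - (k+1 : ℕ) + j) j|
          ≤ ∑ j ∈ Finset.Icc 1 (min p (k+1)),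
              |theta p φ t (k + 1 - j) * φ (t - (k+1 : ℕ) + j) j| :=
            Finset.abs_sum_le_sum_abs _ _
        _ ≤ ∑ j ∈ Finset.Icc 1 (min p (k+1)),
              (B * δ ^ ((k+1) / p) / δ) * |φ (t - (k+1 : ℕ) + j) j| := by
            apply Finset.sum_le_sum
            intro j hj
            rw [abs_mul]
            apply mul_le_mul_of_nonneg_right _ (abs_nonneg _)
            have hj1 := (Finset.mem_Icc.mp hj).1
            have hj2 := (Finset.mem_Icc.mp hj).2
            have hjp : j ≤ p := le_trans hj2 (min_le_left _ _)
            have hlt : k + 1 - j < k + 1 := by omega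
            have h1 : |theta p φ t (k + 1 - j)| ≤ B * δ ^ ((k + 1 - j) / p) :=
              ih _ hlt
            have hdiv : (k+1) / p ≤ (k + 1 - j) / p + 1 := by
              calc (k+1) / p ≤ (k + 1 - j + p) / p :=
                    Nat.div_le_div_right (by omega)
                _ = (k + 1 - j) / p + 1 := Nat.add_div_right _ (by omega)
            have h2 : δ ^ ((k + 1 - j) / p) ≤ δ ^ ((k+1) / p) / δ := by
              rw [le_div_iff₀ hδ0]
              calc δ ^ ((k + 1 - j) / p) * δ = δ ^ ((k + 1 - j) / p + 1) := by
                    rw [pow_succ]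
                _ ≤ δ ^ ((k+1) / p) := pow_le_pow_of_le_one hδ0.le hδ1.le hdiv
            calc |theta p φ t (k + 1 - j)| ≤ B * δ ^ ((k + 1 - j) / p) := h1
              _ ≤ B * (δ ^ ((k+1) / p) / δ) := by
                  apply mul_le_mul_of_nonneg_left h2 hBnn
              _ = B * δ ^ ((k+1) / p) / δ := by ring
        _ = (B * δ ^ ((k+1) / p) / δ) *
              ∑ j ∈ Finset.Icc 1 (min p (k+1)), |φ (t - (k+1 : ℕ) + j) j| := by
            rw [Finset.mul_sum]
        _ ≤ (B * δ ^ ((k+1) / p) / δ) *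
              ∑ j ∈ Finset.Icc 1 p, |φ (t - (k+1 : ℕ) + j) j| := by
            apply mul_le_mul_of_nonneg_left _ (by positivity)
            apply Finset.sum_le_sum_of_subset_of_nonneg
            · apply Finset.Icc_subset_Icc_right (min_le_left _ _)
            · intro j _ _; exact abs_nonneg _
        _ ≤ (B * δ ^ ((k+1) / p) / δ) * (δ * |φ (t - (k+1 : ℕ)) 0|) := by
            apply mul_le_mul_of_nonneg_left (hdom (t - (k+1 : ℕ))).2 (by positivity)
        _ = B * δ ^ ((k+1) / p) * |φ (t - (k+1 : ℕ)) 0| := by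
            field_simp

theorem stmt_4 (p : ℕ) (hp : 1 ≤ p)
    (φ : ℤ → ℕ → ℝ) (hφp : ∀ (t : ℤ) (j : ℕ), p < j → φ t j = 0)
    (δ : ℝ) (hδ0 : 0 < δ) (hδ1 : δ < 1)
    (hdom : ∀ t : ℤ,
      0 < ∑ j ∈ Finset.Icc 1 p, |φ (t + j) j| ∧
      ∑ j ∈ Finset.Icc 1 p, |φ (t + j) j| ≤ δ * |φ t 0|) :
    ∃ θ : ℤ → ℕ → ℝ,
      (∀ t : ℤ, Summable fun i => |θ t i|) ∧
      (∀ (t : ℤ) (i : ℕ),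
        ∑ j ∈ Finset.range (min p i + 1), θ t (i - j) * φ (t - i + j) j =
          if i = 0 then 1 else 0) := by
  have hφ0 : ∀ s : ℤ, 0 < |φ s 0| := by
    intro s
    have h1 := (hdom s).1
    have h2 := (hdom s).2
    nlinarith [abs_nonneg (φ s 0)]
  refine ⟨theta p φ, ?_, ?_⟩
  · intro t
    set B := |theta p φ t 0| with hB
    have hBnn : 0 ≤ B := abs_nonneg _
    set r : ℝ := δ ^ ((p : ℝ)⁻¹) with hr
    have hr0 : 0 ≤ r := Real.rpow_nonneg hδ0.le _
    have hr1 : r < 1 := Real.rpow_lt_one hδ0.le hδ1 (by positivity)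
    apply Summable.of_nonneg_of_le (fun i => abs_nonneg _) (fun i => ?_)
      (((summable_geometric_of_lt_one hr0 hr1).mul_left (B * δ⁻¹)))
    have hb := theta_bound p hp φ δ hδ0 hδ1 hdom hφ0 t i
    have hpR : (0:ℝ) < (p:ℝ) := by exact_mod_cast hp
    have key : δ ^ (i / p) ≤ δ⁻¹ * r ^ i := by
      have hri : r ^ i = δ ^ ((i : ℝ) / p) := by
        rw [hr, ← Real.rpow_natCast (δ ^ ((p:ℝ)⁻¹)) i, ← Real.rpow_mul hδ0.le]
        congr 1
        field_simp
      have hcast : δ ^ (i / p) = δ ^ (((i / p : ℕ) : ℝ)) := by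
        rw [Real.rpow_natCast]
      have hexp : (i : ℝ) / p - 1 ≤ ((i / p : ℕ) : ℝ) := by
        have hmod : i % p < p := Nat.mod_lt _ (by omega)
        have hdm : p * (i / p) + i % p = i := Nat.div_add_mod i p
        have h1 : i < (i / p + 1) * p := by
          calc i = p * (i / p) + i % p := hdm.symm
            _ < p * (i / p) + p := Nat.add_lt_add_left hmod _
            _ = (i / p + 1) * p := by ring
        have h2 : (i : ℝ) < (((i / p : ℕ) : ℝ) + 1) * p := by exact_mod_cast h1
        have h3 : (i : ℝ) / p ≤ ((i / p : ℕ) : ℝ) + 1 := by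
          rw [div_le_iff₀ hpR]
          nlinarith
        linarith
      calc δ ^ (i / p) = δ ^ (((i / p : ℕ) : ℝ)) := hcast
        _ ≤ δ ^ ((i : ℝ) / p - 1) :=
            Real.rpow_le_rpow_of_exponent_ge hδ0 hδ1.le hexp
        _ = δ⁻¹ * r ^ i := by
            rw [Real.rpow_sub hδ0, Real.rpow_one, hri]; ring
    calc |theta p φ t i| ≤ B * δ ^ (i / p) := hb
      _ ≤ B * (δ⁻¹ * r ^ i) := mul_le_mul_of_nonneg_left key hBnn
      _ = B * δ⁻¹ * r ^ i := by ring
  · intro t i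
    match i with
    | 0 =>
      have hne : φ t 0 ≠ 0 := abs_pos.mp (hφ0 t)
      simp [theta, inv_mul_cancel₀ hne]
    | (k+1) =>
      rw [if_neg (by omega)]
      set m := min p (k+1) with hm
      rw [Finset.sum_range_succ']
      have hIcc : ∑ j ∈ Finset.Icc 1 m,
          theta p φ t (k + 1 - j) * φ (t - (k+1 : ℕ) + j) j
          = ∑ j ∈ Finset.range m,
          theta p φ t (k + 1 - (j+1)) * φ (t - (k+1 : ℕ) + (j+1)) (j+1) := by
        rw [show Finset.Icc 1 m = Finset.Ico 1 (m+1) from (Finset.Ico_add_one_right_eq_Icc 1 m).symm,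
          Finset.sum_Ico_eq_sum_range]
        simp only [Nat.add_sub_cancel]
        apply Finset.sum_congr rfl
        intro j _
        congr 2 <;> omega
      have hc : φ (t - (k+1 : ℕ)) 0 ≠ 0 := abs_pos.mp (hφ0 (t - (k+1:ℕ)))
      have hθ := theta_succ p φ t k
      rw [hIcc] at hθ
      simp only [Nat.sub_zero, Nat.cast_zero, add_zero, Nat.cast_add, Nat.cast_one] at *
      push_cast at hθ ⊢
      rw [hθ]
      field_simp
      ring
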